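/- Let p = d₁ + e₂ + d₂ + d₄ = (-2,0,-1,1). Then p lies in the interior of the cone σ₁₆ = cone(d₁,e₂,d₂,d₄), the cone σ₁₆ equals the union cone(p,e₂,d₂,d₄) ∪ cone(d₁,p,d₂,d₄) ∪ cone(d₁,e₂,p,d₄) ∪ cone(d₁,e₂,d₂,p), and each of these four cones has generator matrix (columns in the listed order) of determinant 1. -/

import Mathlib

open Matrix

noncomputable section

def e1 : Fin 4 → ℝ := ![1, 0, 0, 0]
def e2 : Fin 4 → ℝ := ![0, 1, 0, 0]
def e3 : Fin 4 → ℝ := ![0, 0, 1, 0]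
def e4 : Fin 4 → ℝ := ![0, 0, 0, 1]
def d1 : Fin 4 → ℝ := ![-1, 0, -2, 1]
def d2 : Fin 4 → ℝ := ![-2, -1, 0, 1]
def d3 : Fin 4 → ℝ := ![0, -2, -1, 1]
def d4 : Fin 4 → ℝ := ![1, 0, 1, -1]
def p : Fin 4 → ℝ := ![-2, 0, -1, 1]

/-- The cone generated by four vectors: all nonnegative linear combinations. -/
def cone4 (v1 v2 v3 v4 : Fin 4 → ℝ) : Set (Fin 4 → ℝ) :=
  {x | ∃ a b c d : ℝ, 0 ≤ a ∧ 0 ≤ b ∧ 0 ≤ c ∧ 0 ≤ d ∧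
    x = a • v1 + b • v2 + c • v3 + d • v4}

/-- The 4×4 matrix whose columns are `v1, v2, v3, v4` (in this order). -/
def colMat (v1 v2 v3 v4 : Fin 4 → ℝ) : Matrix (Fin 4) (Fin 4) ℝ :=
  (Matrix.of ![v1, v2, v3, v4])ᵀ

lemma hp_sum : p = d1 + e2 + d2 + d4 := by
  funext i; fin_cases i <;> norm_num [p, d1, e2, d2, d4]

/-- the inverse-coordinate identity -/
lemma coord_identity (x : Fin 4 → ℝ) :
    x = (-x 0 - x 2 - 2 * x 3) • d1 + (-x 0 + x 1 - x 3) • e2 +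
        (-x 0 - x 3) • d2 + (-2 * x 0 - x 2 - 4 * x 3) • d4 := by
  funext i; fin_cases i <;>
    simp [d1, e2, d2, d4, Pi.add_apply, Pi.smul_apply] <;> ring

lemma interior_mem : p ∈ interior (cone4 d1 e2 d2 d4) := by
  rw [mem_interior]
  refine ⟨{x | 0 < -x 0 - x 2 - 2 * x 3 ∧ 0 < -x 0 + x 1 - x 3 ∧
      0 < -x 0 - x 3 ∧ 0 < -2 * x 0 - x 2 - 4 * x 3}, ?_, ?_, ?_⟩
  · rintro x ⟨h1, h2, h3, h4⟩
    exact ⟨_, _, _, _, h1.le, h2.le, h3.le, h4.le, coord_identity x⟩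
  · have c0 : Continuous fun x : Fin 4 → ℝ => x 0 := continuous_apply 0
    have c1 : Continuous fun x : Fin 4 → ℝ => x 1 := continuous_apply 1
    have c2 : Continuous fun x : Fin 4 → ℝ => x 2 := continuous_apply 2
    have c3 : Continuous fun x : Fin 4 → ℝ => x 3 := continuous_apply 3
    have h1 : IsOpen {x : Fin 4 → ℝ | 0 < -x 0 - x 2 - 2 * x 3} :=
      isOpen_lt continuous_const (by fun_prop)
    have h2 : IsOpen {x : Fin 4 → ℝ | 0 < -x 0 + x 1 - x 3} :=
      isOpen_lt continuous_const (by fun_prop)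
    have h3 : IsOpen {x : Fin 4 → ℝ | 0 < -x 0 - x 3} :=
      isOpen_lt continuous_const (by fun_prop)
    have h4 : IsOpen {x : Fin 4 → ℝ | 0 < -2 * x 0 - x 2 - 4 * x 3} :=
      isOpen_lt continuous_const (by fun_prop)
    exact h1.inter (h2.inter (h3.inter h4))
  · simp [p]; norm_num

theorem subdivision_of_sigma16 :
    p = d1 + e2 + d2 + d4 ∧
    p ∈ interior (cone4 d1 e2 d2 d4) ∧
    cone4 d1 e2 d2 d4 =
      cone4 p e2 d2 d4 ∪ cone4 d1 p d2 d4 ∪ cone4 d1 e2 p d4 ∪ cone4 d1 e2 d2 p ∧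
    (colMat p e2 d2 d4).det = 1 ∧
    (colMat d1 p d2 d4).det = 1 ∧
    (colMat d1 e2 p d4).det = 1 ∧
    (colMat d1 e2 d2 p).det = 1 := by
  refine ⟨hp_sum, interior_mem, ?_, ?_, ?_, ?_, ?_⟩
  · ext x
    constructor
    · rintro ⟨a, b, c, d, ha, hb, hc, hd, rfl⟩
      have hp := hp_sum
      rcases le_total a b with h1 | h1
      · rcases le_total a c with h2 | h2
        · rcases le_total a d with h3 | h3
          · exact Or.inl (Or.inl (Or.inl ⟨a, b - a, c - a, d - a, ha,
              by linarith, by linarith, by linarith, by rw [hp]; module⟩))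
          · exact Or.inr ⟨a - d, b - d, c - d, d, by linarith, by linarith,
              by linarith, hd, by rw [hp]; module⟩
        · rcases le_total c d with h3 | h3
          · exact Or.inl (Or.inr ⟨a - c, b - c, c, d - c, by linarith,
              by linarith, hc, by linarith, by rw [hp]; module⟩)
          · exact Or.inr ⟨a - d, b - d, c - d, d, by linarith, by linarith,
              by linarith, hd, by rw [hp]; module⟩
      · rcases le_total b c with h2 | h2
        · rcases le_total b d with h3 | h3
          · exact Or.inl (Or.inl (Or.inr ⟨a - b, b, c - b, d - b, by linarith,
              hb, by linarith, by linarith, by rw [hp]; module⟩))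
          · exact Or.inr ⟨a - d, b - d, c - d, d, by linarith, by linarith,
              by linarith, hd, by rw [hp]; module⟩
        · rcases le_total c d with h3 | h3
          · exact Or.inl (Or.inr ⟨a - c, b - c, c, d - c, by linarith,
              by linarith, hc, by linarith, by rw [hp]; module⟩)
          · exact Or.inr ⟨a - d, b - d, c - d, d, by linarith, by linarith,
              by linarith, hd, by rw [hp]; module⟩
    · have hp := hp_sum
      rintro (((⟨a, b, c, d, ha, hb, hc, hd, rfl⟩ | ⟨a, b, c, d, ha, hb, hc, hd, rfl⟩) |
        ⟨a, b, c, d, ha, hb, hc, hd, rfl⟩) | ⟨a, b, c, d, ha, hb, hc, hd, rfl⟩)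
      · exact ⟨a, a + b, a + c, a + d, ha, by linarith, by linarith, by linarith,
          by rw [hp]; module⟩
      · exact ⟨a + b, b, b + c, b + d, by linarith, hb, by linarith, by linarith,
          by rw [hp]; module⟩
      · exact ⟨a + c, b + c, c, c + d, by linarith, by linarith, hc, by linarith,
          by rw [hp]; module⟩
      · exact ⟨a + d, b + d, c + d, d, by linarith, by linarith, by linarith, hd,
          by rw [hp]; module⟩
  · have h : colMat p e2 d2 d4 =
        !![-2, 0, -2, 1; 0, 1, -1, 0; -1, 0, 0, 1; 1, 0, 1, -1] := by
      ext i j; fin_cases i <;> fin_cases j <;>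
        norm_num [colMat, p, e2, d2, d4, Matrix.vecHead, Matrix.vecTail]
    rw [h]
    simp [Matrix.det_succ_row_zero, Fin.sum_univ_succ]
    simp [Fin.succAbove, Fin.lt_def]
    norm_num
  · have h : colMat d1 p d2 d4 =
        !![-1, -2, -2, 1; 0, 0, -1, 0; -2, -1, 0, 1; 1, 1, 1, -1] := by
      ext i j; fin_cases i <;> fin_cases j <;>
        norm_num [colMat, p, d1, d2, d4, Matrix.vecHead, Matrix.vecTail]
    rw [h]
    simp [Matrix.det_succ_row_zero, Fin.sum_univ_succ]
    simp [Fin.succAbove, Fin.lt_def]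
    norm_num
  · have h : colMat d1 e2 p d4 =
        !![-1, 0, -2, 1; 0, 1, 0, 0; -2, 0, -1, 1; 1, 0, 1, -1] := by
      ext i j; fin_cases i <;> fin_cases j <;>
        norm_num [colMat, p, d1, e2, d4, Matrix.vecHead, Matrix.vecTail]
    rw [h]
    simp [Matrix.det_succ_row_zero, Fin.sum_univ_succ]
    simp [Fin.succAbove, Fin.lt_def]
    norm_num
  · have h : colMat d1 e2 d2 p =
        !![-1, 0, -2, -2; 0, 1, -1, 0; -2, 0, 0, -1; 1, 0, 1, 1] := by
      ext i j; fin_cases i <;> fin_cases j <;>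
        norm_num [colMat, p, d1, e2, d2, Matrix.vecHead, Matrix.vecTail]
    rw [h]
    simp [Matrix.det_succ_row_zero, Fin.sum_univ_succ]
    simp [Fin.succAbove, Fin.lt_def]
    norm_num
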